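/- For every integer x ≥ 9, f(x) ≤ x − ⌊√x⌋, where ⌊√x⌋ denotes the integer square root of x (the largest y with y² ≤ x). -/

import Mathlib

/-- Fuel-based helper for the recursive function `f`. For `k ≤ fuel`, `faux fuel k`
computes the value of `f k`. -/
def faux : ℕ → ℕ → ℕ
  | 0, _ => 1
  | fuel + 1, k =>
    if k ≤ 2 then 1
    else if k ≤ 4 then 2
    else
      min (faux fuel (k - 1) + 1)
        (((List.range k).filter (fun k1 => 3 ≤ k1 ∧ k1 ∣ k)).foldr
          (fun k1 acc => min (k - k1 - k / k1 + 1 + max (faux fuel k1) (k / k1)) acc)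
          (faux fuel (k - 1) + 1))

/-- `f 1 = 1`, `f 2 = 1`, `f 3 = 2`, `f 4 = 2`, and for `k > 4`,
`f k = min (f (k-1) + 1)
          (min over factorizations k = k₁·k₂ with 3 ≤ k₁ < k, 2 ≤ k₂ of
             k₁·k₂ - k₁ - k₂ + 1 + max (f k₁) k₂)`,
where the inner minimum is omitted when no such factorization exists.
(Note: for a divisor `k₁` of `k` with `3 ≤ k₁ < k`, the cofactor `k₂ = k / k₁`
automatically satisfies `k₂ ≥ 2`.) -/
def f (k : ℕ) : ℕ := faux k k


lemma foldr_min_le (g : ℕ → ℕ) (init : ℕ) (l : List ℕ) (a : ℕ) (ha : a ∈ l) :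
    l.foldr (fun k1 acc => min (g k1) acc) init ≤ g a := by
  induction l with
  | nil => cases ha
  | cons b t ih =>
    rcases List.mem_cons.mp ha with h | h
    · subst h; exact min_le_left _ _
    · exact le_trans (min_le_right _ _) (ih h)

lemma fauxB : ∀ fuel k, 4 ≤ k → k ≤ fuel → faux fuel k ≤ k - 2 := by
  intro fuel
  induction fuel with
  | zero => intro k h1 h2; omega
  | succ n ih =>
    intro k h1 h2
    by_cases h4 : k ≤ 4
    · have hk : k = 4 := by omega
      subst hk
      simp [faux]
    · have : faux (n+1) k ≤ faux n (k-1) + 1 := by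
        simp only [faux]
        rw [if_neg (by omega), if_neg (by omega)]
        exact min_le_left _ _
      have h5 := ih (k-1) (by omega) (by omega)
      omega

lemma f_step (k : ℕ) (h : 4 ≤ k) : f (k+1) ≤ f k + 1 := by
  show faux (k+1) (k+1) ≤ faux k k + 1
  simp only [faux]
  rw [if_neg (by omega), if_neg (by omega)]
  simpa using min_le_left _ _

lemma f_add (m n : ℕ) (h : 4 ≤ m) : f (m + n) ≤ f m + n := by
  induction n with
  | zero => simp
  | succ n ih =>
    calc f (m+n+1) ≤ f (m+n) + 1 := f_step _ (by omega)
    _ ≤ f m + n + 1 := by omega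

/-- For every integer `x ≥ 9`, `f x ≤ x - ⌊√x⌋`, where `⌊√x⌋` is the integer
square root of `x` (the largest `y` with `y² ≤ x`). -/
theorem stmt_5 (x : ℕ) (hx : 9 ≤ x) :
    f x ≤ x - Nat.sqrt x := by
  obtain ⟨t, ht⟩ : ∃ t, Nat.sqrt x = t + 3 := by
    have h3 : 3 ≤ Nat.sqrt x := Nat.le_sqrt.mpr (by omega)
    exact ⟨Nat.sqrt x - 3, by omega⟩
  have hsx : (t+3) * (t+3) ≤ x := by
    have h := Nat.sqrt_le' x
    rw [ht] at h
    nlinarith [h]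
  have hsx' : t*t + 6*t + 9 ≤ x := by nlinarith
  -- k0 = (t+4)*(t+2) = t^2+6t+8
  set k0 : ℕ := t*t + 6*t + 8 with hk0
  have hfact : k0 = (t+4) * (t+2) := by ring
  obtain ⟨m, hm⟩ : ∃ m, k0 = m + 1 := ⟨k0 - 1, by omega⟩
  -- bound faux m (t+4)
  have hfaux : faux m (t+4) ≤ t + 2 := by
    have := fauxB m (t+4) (by omega) (by omega)
    omega
  have hdiv : (m+1) / (t+4) = t + 2 := by
    rw [← hm, hfact]
    exact Nat.mul_div_cancel_left _ (by omega)
  have hmem : (t+4) ∈ (List.range (m+1)).filter (fun k1 => 3 ≤ k1 ∧ k1 ∣ (m+1)) := by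
    rw [List.mem_filter, List.mem_range]
    refine ⟨by omega, ?_⟩
    simp only [decide_eq_true_eq]
    exact ⟨by omega, ⟨t+2, by rw [← hm, hfact]⟩⟩
  have hkey : f k0 ≤ t*t + 5*t + 5 := by
    rw [hm]
    show faux (m+1) (m+1) ≤ _
    simp only [faux]
    rw [if_neg (by omega), if_neg (by omega)]
    refine le_trans (min_le_right _ _) ?_
    refine le_trans (foldr_min_le
      (fun k1 => (m+1) - k1 - (m+1)/k1 + 1 + max (faux m k1) ((m+1)/k1)) _ _ _ hmem) ?_
    rw [hdiv]
    have hmax : max (faux m (t+4)) (t+2) = t+2 := max_eq_right hfaux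
    rw [hmax]
    omega
  have hxk : k0 ≤ x := by omega
  have := f_add k0 (x - k0) (by omega)
  rw [Nat.add_sub_cancel' hxk] at this
  have hfin : f x ≤ t*t + 5*t + 5 + (x - k0) := by omega
  rw [ht]
  omega
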